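/- There is a unique homomorphism of ℂ[x_1^{±1},…,x_d^{±1}]-modules φ : PL → ℂ(x_1,…,x_d) such that for every simple rational cone K = v + ℝ_{≥0}w_1 + ⋯ + ℝ_{≥0}w_d with fundamental parallelepiped P_K, φ(S_K) = σ_{P_K}(x) / ∏_{i=1}^d (1 − x^{w_i}), where σ_{P_K}(x) = Σ_{m ∈ P_K∩ℤ^d} x^m is a Laurent polynomial. -/

import Mathlib

open scoped BigOperators Classical

noncomputable section

/-- The real vector corresponding to an integer vector. -/
def toR (d : ℕ) (m : Fin d → ℤ) : Fin d → ℝ := fun i => (m i : ℝ)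

/-- The standard dot product on `ℝ^d`. -/
def dotR (d : ℕ) (x y : Fin d → ℝ) : ℝ := ∑ i, x i * y i

/-- Laurent polynomials `ℂ[x₁^{±1},…,x_d^{±1}]`, represented by their coefficient functions. -/
abbrev LaurentPoly (d : ℕ) := (Fin d → ℤ) →₀ ℂ

/-- The integer-point generating series of a subset of `ℝ^d`: the function `ℤ^d → ℂ`
equal to `1` on `S ∩ ℤ^d` and `0` elsewhere. -/
def genSeries (d : ℕ) (S : Set (Fin d → ℝ)) : (Fin d → ℤ) → ℂ :=
  fun m => if toR d m ∈ S then 1 else 0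

/-- The action of a Laurent polynomial on a formal Laurent series,
`(x^w · S)(m) = S(m - w)` extended linearly. -/
def actLP (d : ℕ) (g : LaurentPoly d) (S : (Fin d → ℤ) → ℂ) : (Fin d → ℤ) → ℂ :=
  fun m => ∑ w ∈ g.support, g w * S (m - w)

/-- The series of a Laurent polynomial `f`, i.e. `Σ_m f_m x^m` as a formal series. -/
def seriesOf (d : ℕ) (f : LaurentPoly d) : (Fin d → ℤ) → ℂ := fun m => f m

/-- The cone `v + ℝ_{≥0} w₁ + ⋯ + ℝ_{≥0} w_n`. -/
def coneSet (d n : ℕ) (v : Fin d → ℝ) (w : Fin n → Fin d → ℤ) : Set (Fin d → ℝ) :=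
  {y | ∃ lam : Fin n → ℝ, (∀ i, 0 ≤ lam i) ∧ y = v + ∑ i, lam i • toR d (w i)}

/-- The fundamental half-open parallelepiped `{v + Σ λᵢ wᵢ : 0 ≤ λᵢ < 1}`. -/
def parSet (d : ℕ) (v : Fin d → ℝ) (w : Fin d → Fin d → ℤ) : Set (Fin d → ℝ) :=
  {y | ∃ lam : Fin d → ℝ, (∀ i, 0 ≤ lam i ∧ lam i < 1) ∧ y = v + ∑ i, lam i • toR d (w i)}

/-- A simple rational cone: `v + ℝ_{≥0} w₁ + ⋯ + ℝ_{≥0} w_d` with `w₁,…,w_d ∈ ℤ^d`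
linearly independent. -/
def IsSimpleCone (d : ℕ) (K : Set (Fin d → ℝ)) : Prop :=
  ∃ (v : Fin d → ℝ) (w : Fin d → Fin d → ℤ),
    LinearIndependent ℝ (fun i => toR d (w i)) ∧ K = coneSet d d v w

/-- Membership in the module `PL` of polyhedral Laurent series: a finite
`ℂ[x₁^{±1},…,x_d^{±1}]`-linear combination of the series of simple rational cones. -/
def MemPL (d : ℕ) (S : (Fin d → ℤ) → ℂ) : Prop :=
  ∃ (n : ℕ) (g : Fin n → LaurentPoly d) (K : Fin n → Set (Fin d → ℝ)),
    (∀ i, IsSimpleCone d (K i)) ∧ S = ∑ i, actLP d (g i) (genSeries d (K i))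

/-- The field of rational functions `ℂ(x₁,…,x_d)`. -/
abbrev RatF (d : ℕ) := FractionRing (MvPolynomial (Fin d) ℂ)

/-- The monomial `x^w`, `w ∈ ℤ^d`, as a rational function. -/
def ratMon (d : ℕ) (w : Fin d → ℤ) : RatF d :=
  ∏ i, (algebraMap (MvPolynomial (Fin d) ℂ) (RatF d) (MvPolynomial.X i)) ^ (w i)

/-- A Laurent polynomial as a rational function. -/
def toRat (d : ℕ) (g : LaurentPoly d) : RatF d :=
  ∑ w ∈ g.support, algebraMap (MvPolynomial (Fin d) ℂ) (RatF d) (MvPolynomial.C (g w)) * ratMon d w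

/-- `σ_S(x) = Σ_{m ∈ S ∩ ℤ^d} x^m`, as a rational function (for `S` with finitely many
integer points). -/
def sigmaSet (d : ℕ) (S : Set (Fin d → ℝ)) : RatF d :=
  ∑ᶠ m ∈ {m : Fin d → ℤ | toR d m ∈ S}, ratMon d m

/-- `φ : PL → ℂ(x₁,…,x_d)` is the `ℂ[x₁^{±1},…,x_d^{±1}]`-module homomorphism sending the
series `S_K` of a simple rational cone `K` to `σ_{P_K}(x) / Π (1 - x^{wᵢ})`. -/
def IsPhi (d : ℕ) (φ : ((Fin d → ℤ) → ℂ) → RatF d) : Prop :=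
  (∀ S T, MemPL d S → MemPL d T → φ (S + T) = φ S + φ T) ∧
  (∀ (g : LaurentPoly d) (S), MemPL d S → φ (actLP d g S) = toRat d g * φ S) ∧
  (∀ (v : Fin d → ℝ) (w : Fin d → Fin d → ℤ),
      LinearIndependent ℝ (fun i => toR d (w i)) →
      φ (genSeries d (coneSet d d v w)) =
        sigmaSet d (parSet d v w) / ∏ i, (1 - ratMon d (w i)))

/-- A convex polyhedron: an intersection of finitely many closed halfspaces. -/
def IsPolyhedron (d : ℕ) (P : Set (Fin d → ℝ)) : Prop :=
  ∃ (n : ℕ) (a : Fin n → Fin d → ℝ) (b : Fin n → ℝ),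
    P = {y | ∀ i, dotR d (a i) y ≤ b i}

/-- The polar `P^∨ = {x : ⟨x,y⟩ ≤ 1 for all y ∈ P}`. -/
def polar (d : ℕ) (P : Set (Fin d → ℝ)) : Set (Fin d → ℝ) :=
  {x | ∀ y ∈ P, dotR d x y ≤ 1}


namespace S4

variable {d : ℕ}
abbrev A (d : ℕ) := AddMonoidAlgebra ℂ (Fin d → ℤ)

instance : Coe (A d) (LaurentPoly d) := ⟨AddMonoidAlgebra.coeff⟩

lemma actLP_eq_sum (g : LaurentPoly d) (S : (Fin d → ℤ) → ℂ) (m) :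
    actLP d g S m = g.sum fun w c => c * S (m - w) := rfl

lemma actLP_add_left (g h : A d) (S : (Fin d → ℤ) → ℂ) :
    actLP d (g + h).coeff S = actLP d g S + actLP d h S := by
  funext m
  show (g.coeff + h.coeff).sum (fun w c => c * S (m - w)) = _
  rw [Finsupp.sum_add_index (by simp) (by intros; ring)]
  rfl

lemma actLP_single (w : Fin d → ℤ) (c : ℂ) (S : (Fin d → ℤ) → ℂ) :
    actLP d (AddMonoidAlgebra.single w c) S = fun m => c * S (m - w) := by
  funext m
  show (Finsupp.single w c).sum (fun w c => c * S (m - w)) = _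
  rw [Finsupp.sum_single_index (by simp)]

lemma actLP_mul (g h : A d) (S : (Fin d → ℤ) → ℂ) :
    actLP d (g * h).coeff S = actLP d g (actLP d h S) := by
  funext m
  show (g * h).coeff.sum (fun w c => c * S (m - w)) = g.coeff.sum fun w c => c * actLP d h S (m - w)
  rw [AddMonoidAlgebra.mul_def]
  simp only [AddMonoidAlgebra.coeff_finsuppSum, AddMonoidAlgebra.coeff_single]
  rw [Finsupp.sum_sum_index (by simp) (by intros; ring)]
  refine Finsupp.sum_congr fun a _ => ?_
  rw [Finsupp.sum_sum_index (by simp) (by intros; ring)]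
  rw [actLP_eq_sum, Finsupp.mul_sum]
  refine Finsupp.sum_congr fun b _ => ?_
  rw [Finsupp.sum_single_index (by simp)]
  rw [sub_add_eq_sub_sub]
  ring

lemma actLP_one (S : (Fin d → ℤ) → ℂ) : actLP d (1 : A d) S = S := by
  funext m
  show ((1 : A d)).coeff.sum (fun w c => c * S (m - w)) = S m
  rw [AddMonoidAlgebra.one_def, AddMonoidAlgebra.coeff_single, Finsupp.sum_single_index (by simp)]
  simp

lemma actLP_seriesOf (g f : A d) :
    actLP d g (seriesOf d f) = seriesOf d (g * f).coeff := by
  funext m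
  show g.coeff.sum (fun w c => c * f.coeff (m - w)) = (g * f).coeff m
  rw [AddMonoidAlgebra.mul_def]
  simp only [AddMonoidAlgebra.coeff_finsuppSum, AddMonoidAlgebra.coeff_single]
  rw [Finsupp.sum_apply]
  refine Finsupp.sum_congr fun a _ => ?_
  rw [Finsupp.sum_apply]
  have : (f.coeff.sum fun b c => (Finsupp.single (a + b) (g.coeff a * c)) m)
      = f.coeff.sum fun b c => if b = m - a then g.coeff a * c else 0 := by
    refine Finsupp.sum_congr fun b _ => ?_
    rw [Finsupp.single_apply]
    congr 1
    simp [eq_comm, eq_sub_iff_add_eq']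
  rw [this, Finsupp.sum]
  rw [Finset.sum_ite_eq' f.coeff.support (m - a) (fun b => g.coeff a * f.coeff b)]
  by_cases h : m - a ∈ f.coeff.support
  · simp [h]
  · simp [h, Finsupp.notMem_support_iff.mp h]

lemma algebraMap_X_ne_zero (i : Fin d) :
    algebraMap (MvPolynomial (Fin d) ℂ) (RatF d) (MvPolynomial.X i) ≠ 0 := by
  intro h
  have := IsFractionRing.injective (MvPolynomial (Fin d) ℂ) (RatF d)
  have h0 : (MvPolynomial.X i : MvPolynomial (Fin d) ℂ) = 0 := by
    apply this; simpa using h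
  exact MvPolynomial.X_ne_zero i h0

lemma ratMon_zero : ratMon d 0 = 1 := by simp [ratMon]

lemma ratMon_add (u v : Fin d → ℤ) : ratMon d (u + v) = ratMon d u * ratMon d v := by
  rw [ratMon, ratMon, ratMon, ← Finset.prod_mul_distrib]
  refine Finset.prod_congr rfl fun i _ => ?_
  rw [Pi.add_apply, zpow_add₀ (algebraMap_X_ne_zero i)]

lemma toRat_eq_sum (g : LaurentPoly d) :
    toRat d g = g.sum fun w c =>
      algebraMap (MvPolynomial (Fin d) ℂ) (RatF d) (MvPolynomial.C c) * ratMon d w := rfl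

lemma toRat_single (w : Fin d → ℤ) (c : ℂ) :
    toRat d (AddMonoidAlgebra.single w c)
      = algebraMap (MvPolynomial (Fin d) ℂ) (RatF d) (MvPolynomial.C c) * ratMon d w := by
  rw [toRat_eq_sum]
  exact Finsupp.sum_single_index (by simp)

lemma toRat_add (g h : A d) : toRat d (g + h).coeff = toRat d g + toRat d h := by
  rw [toRat_eq_sum, AddMonoidAlgebra.coeff_add]
  rw [Finsupp.sum_add_index (by simp) (by intros; rw [MvPolynomial.C_add, RingHom.map_add, add_mul])]
  rfl

lemma toRat_zero : toRat d 0 = 0 := by simp [toRat]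

lemma toRat_neg (g : A d) : toRat d (-g).coeff = - toRat d g := by
  have := toRat_add (-g) g
  simp only [neg_add_cancel, AddMonoidAlgebra.coeff_zero, toRat_zero] at this
  linear_combination -this

lemma toRat_one : toRat d (1 : A d) = 1 := by
  rw [AddMonoidAlgebra.one_def, toRat_single]
  simp [ratMon_zero]

lemma toRat_mul (g h : A d) : toRat d (g * h).coeff = toRat d g * toRat d h := by
  rw [AddMonoidAlgebra.mul_def, toRat_eq_sum]
  simp only [AddMonoidAlgebra.coeff_finsuppSum, AddMonoidAlgebra.coeff_single]
  rw [Finsupp.sum_sum_index (by simp) (by intros; rw [MvPolynomial.C_add, RingHom.map_add, add_mul])]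
  rw [toRat_eq_sum g.coeff, Finsupp.sum_mul]
  refine Finsupp.sum_congr fun a _ => ?_
  rw [Finsupp.sum_sum_index (by simp) (by intros; rw [MvPolynomial.C_add, RingHom.map_add, add_mul])]
  rw [toRat_eq_sum h.coeff, Finsupp.mul_sum]
  refine Finsupp.sum_congr fun b _ => ?_
  rw [Finsupp.sum_single_index (by simp), ratMon_add, MvPolynomial.C_mul, RingHom.map_mul]
  ring

lemma toRat_sub (g h : A d) : toRat d (g - h).coeff = toRat d g - toRat d h := by
  rw [sub_eq_add_neg, toRat_add, toRat_neg, sub_eq_add_neg]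

lemma prod_X_pow (f : Fin d → ℕ) :
    (∏ i, (MvPolynomial.X i : MvPolynomial (Fin d) ℂ) ^ (f i))
      = MvPolynomial.monomial (Finsupp.equivFunOnFinite.symm f) 1 := by
  rw [← MvPolynomial.prod_X_pow_eq_monomial]
  simp_rw [Finsupp.coe_equivFunOnFinite_symm]
  refine (Finset.prod_subset (Finset.subset_univ _) ?_).symm
  intro i _ hi
  have : f i = 0 := by
    by_contra hne
    exact hi (Finsupp.mem_support_iff.2 (by simpa [Finsupp.coe_equivFunOnFinite_symm]))
  simp [this]

lemma ratMon_ne_one {u : Fin d → ℤ} (hu : u ≠ 0) : ratMon d u ≠ 1 := by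
  intro h
  set φ := algebraMap (MvPolynomial (Fin d) ℂ) (RatF d) with hφ
  have hX : ∀ i, φ (MvPolynomial.X i) ≠ 0 := algebraMap_X_ne_zero
  have key : ∀ i : Fin d, φ (MvPolynomial.X i) ^ (u i)
      = φ (MvPolynomial.X i) ^ ((u i).toNat) / φ (MvPolynomial.X i) ^ ((-u i).toNat) := by
    intro i
    rw [eq_div_iff (pow_ne_zero _ (hX i)), ← zpow_natCast (φ (MvPolynomial.X i)) ((-u i).toNat),
      ← zpow_natCast (φ (MvPolynomial.X i)) ((u i).toNat), ← zpow_add₀ (hX i)]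
    congr 1
    omega
  have h2 : (∏ i, φ (MvPolynomial.X i) ^ ((u i).toNat))
      = ∏ i, φ (MvPolynomial.X i) ^ ((-u i).toNat) := by
    rw [ratMon] at h
    rw [← hφ] at h
    simp_rw [key] at h
    rw [Finset.prod_div_distrib, div_eq_one_iff_eq (Finset.prod_ne_zero_iff.2
      (fun i _ => pow_ne_zero _ (hX i)))] at h
    exact h
  have h3 : ((∏ i, (MvPolynomial.X i : MvPolynomial (Fin d) ℂ) ^ ((u i).toNat)))
      = ∏ i, (MvPolynomial.X i : MvPolynomial (Fin d) ℂ) ^ ((-u i).toNat) := by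
    apply IsFractionRing.injective (MvPolynomial (Fin d) ℂ) (RatF d)
    rw [map_prod, map_prod]
    simpa using h2
  rw [prod_X_pow, prod_X_pow] at h3
  rcases (MvPolynomial.monomial_eq_monomial_iff _ _ _ _).1 h3 with h4 | h4
  · have h5 : (fun i => (u i).toNat) = fun i => (-u i).toNat :=
      Finsupp.equivFunOnFinite.symm.injective h4.1
    apply hu
    funext i
    have := congrFun h5 i
    simp only [Pi.zero_apply]
    omega
  · simp at h4

lemma actLP_sub (g h : A d) (S : (Fin d → ℤ) → ℂ) :
    actLP d (g - h).coeff S = actLP d g S - actLP d h S := by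
  have := actLP_add_left (g - h) h S
  rw [sub_add_cancel] at this
  rw [this]
  abel

lemma toR_sub (m u : Fin d → ℤ) : toR d (m - u) = toR d m - toR d u := by
  funext i; simp [toR]

section Cone
variable (v : Fin d → ℝ) (w : Fin d → Fin d → ℤ)
variable (hw : LinearIndependent ℝ (fun i => toR d (w i)))

def coneBasis : Module.Basis (Fin d) ℝ (Fin d → ℝ) :=
  Module.Basis.mk hw (hw.span_eq_top_of_card_eq_finrank' (by simp)).ge

lemma coneBasis_apply (i : Fin d) : coneBasis w hw i = toR d (w i) := by
  rw [coneBasis, Module.Basis.mk_apply]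

/-- coordinates of `y - v` w.r.t. the basis. -/
def rep (y : Fin d → ℝ) : Fin d → ℝ := fun i => (coneBasis w hw).repr (y - v) i

lemma rep_eq (lam : Fin d → ℝ) :
    rep v w hw (v + ∑ i, lam i • toR d (w i)) = lam := by
  have h1 : (v + ∑ i, lam i • toR d (w i)) - v = ∑ i, lam i • coneBasis w hw i := by
    simp_rw [coneBasis_apply]
    abel
  funext i
  rw [rep, h1, Module.Basis.repr_sum_self]

lemma self_eq_rep (y : Fin d → ℝ) :
    y = v + ∑ i, rep v w hw y i • toR d (w i) := by
  have := (coneBasis w hw).sum_repr (y - v)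
  simp_rw [coneBasis_apply] at this
  rw [show (fun i => ((coneBasis w hw).repr (y - v)) i • toR d (w i))
      = fun i => rep v w hw y i • toR d (w i) from rfl] at this
  rw [this]
  abel

lemma mem_cone_iff (y : Fin d → ℝ) :
    y ∈ coneSet d d v w ↔ ∀ i, 0 ≤ rep v w hw y i := by
  constructor
  · rintro ⟨lam, h0, rfl⟩
    rw [rep_eq]
    exact h0
  · intro h
    exact ⟨rep v w hw y, h, self_eq_rep v w hw y⟩

lemma mem_par_iff (y : Fin d → ℝ) :
    y ∈ parSet d v w ↔ ∀ i, 0 ≤ rep v w hw y i ∧ rep v w hw y i < 1 := by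
  constructor
  · rintro ⟨lam, h0, rfl⟩
    rw [rep_eq]
    exact h0
  · intro h
    exact ⟨rep v w hw y, h, self_eq_rep v w hw y⟩

lemma rep_shift (m : Fin d → ℤ) (j i : Fin d) :
    rep v w hw (toR d (m - w j)) i = rep v w hw (toR d m) i - if j = i then 1 else 0 := by
  rw [toR_sub]
  have h1 : toR d m - toR d (w j) - v = (toR d m - v) - coneBasis w hw j := by
    rw [coneBasis_apply]; abel
  rw [rep, h1, map_sub, Module.Basis.repr_self]
  simp [rep, Finsupp.single_apply]

def conePolyS (w : Fin d → Fin d → ℤ) (s : Finset (Fin d)) : A d :=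
  ∏ i ∈ s, ((1 : A d) - AddMonoidAlgebra.single (w i) 1)

lemma key_step (s : Finset (Fin d)) :
    actLP d (conePolyS w s) (genSeries d (coneSet d d v w))
    = fun m => ∏ i, (if i ∈ s
        then (if 0 ≤ rep v w hw (toR d m) i ∧ rep v w hw (toR d m) i < 1 then (1:ℂ) else 0)
        else (if 0 ≤ rep v w hw (toR d m) i then (1:ℂ) else 0)) := by
  classical
  induction s using Finset.induction_on with
  | empty =>
    rw [show conePolyS w ∅ = 1 from Finset.prod_empty, actLP_one]
    funext m
    simp only [Finset.notMem_empty, if_false]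
    have hmem : (toR d m ∈ coneSet d d v w) ↔
        ∀ i ∈ Finset.univ, 0 ≤ rep v w hw (toR d m) i := by
      rw [mem_cone_iff v w hw]; simp
    show (if toR d m ∈ coneSet d d v w then (1:ℂ) else 0) = _
    rw [Finset.prod_boole]
    simp only [hmem]
    by_cases h : ∀ i ∈ Finset.univ, 0 ≤ rep v w hw (toR d m) i <;> simp [h]
  | @insert j s hj ih =>
    rw [show conePolyS w (insert j s)
        = ((1 : A d) - AddMonoidAlgebra.single (w j) 1) * conePolyS w s
        from Finset.prod_insert hj]
    rw [actLP_mul, ih, actLP_sub, actLP_one, actLP_single]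
    funext m
    simp only [Pi.sub_apply, one_mul]
    set G1 : Fin d → ℂ := fun i => if i ∈ s
        then (if 0 ≤ rep v w hw (toR d m) i ∧ rep v w hw (toR d m) i < 1 then (1:ℂ) else 0)
        else (if 0 ≤ rep v w hw (toR d m) i then (1:ℂ) else 0) with hG1
    set G2 : Fin d → ℂ := fun i => if i ∈ s
        then (if 0 ≤ rep v w hw (toR d (m - w j)) i ∧
            rep v w hw (toR d (m - w j)) i < 1 then (1:ℂ) else 0)
        else (if 0 ≤ rep v w hw (toR d (m - w j)) i then (1:ℂ) else 0) with hG2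
    set G3 : Fin d → ℂ := fun i => if i ∈ insert j s
        then (if 0 ≤ rep v w hw (toR d m) i ∧ rep v w hw (toR d m) i < 1 then (1:ℂ) else 0)
        else (if 0 ≤ rep v w hw (toR d m) i then (1:ℂ) else 0) with hG3
    show (∏ i, G1 i) - (∏ i, G2 i) = ∏ i, G3 i
    rw [← Finset.mul_prod_erase Finset.univ G1 (Finset.mem_univ j),
        ← Finset.mul_prod_erase Finset.univ G2 (Finset.mem_univ j),
        ← Finset.mul_prod_erase Finset.univ G3 (Finset.mem_univ j)]
    have e2 : ∏ i ∈ Finset.univ.erase j, G2 i = ∏ i ∈ Finset.univ.erase j, G1 i := by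
      refine Finset.prod_congr rfl fun i hi => ?_
      have hij : j ≠ i := (Finset.ne_of_mem_erase hi).symm
      simp only [hG2, hG1, rep_shift v w hw m j i, if_neg hij, sub_zero]
    have e3 : ∏ i ∈ Finset.univ.erase j, G3 i = ∏ i ∈ Finset.univ.erase j, G1 i := by
      refine Finset.prod_congr rfl fun i hi => ?_
      have hij : i ≠ j := Finset.ne_of_mem_erase hi
      simp only [hG3, hG1, Finset.mem_insert, hij, false_or]
    have hfac : G1 j - G2 j = G3 j := by
      simp only [hG1, hG2, hG3]
      rw [if_neg hj, if_neg hj, if_pos (Finset.mem_insert_self j s),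
        rep_shift v w hw m j j, if_pos rfl]
      by_cases h1 : 0 ≤ rep v w hw (toR d m) j <;>
        by_cases h2 : rep v w hw (toR d m) j < 1
      · rw [if_pos h1, if_neg (by intro h; linarith), if_pos ⟨h1, h2⟩]; ring
      · rw [if_pos h1, if_pos (by linarith), if_neg (fun h => h2 h.2)]; ring
      · rw [if_neg h1, if_neg (fun h => h1 (by linarith)), if_neg (fun h => h1 h.1)]; ring
      · rw [if_neg h1, if_neg (fun h => h1 (by linarith)), if_neg (fun h => h1 h.1)]; ring
    rw [e2, e3, ← sub_mul, hfac]

lemma key_identity (hw : LinearIndependent ℝ (fun i => toR d (w i))) :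
    actLP d (conePolyS w Finset.univ) (genSeries d (coneSet d d v w))
    = genSeries d (parSet d v w) := by
  rw [key_step v w hw Finset.univ]
  funext m
  simp only [Finset.mem_univ, if_true]
  have hmem : (toR d m ∈ parSet d v w) ↔
      ∀ i ∈ Finset.univ, 0 ≤ rep v w hw (toR d m) i ∧ rep v w hw (toR d m) i < 1 := by
    rw [mem_par_iff v w hw]; simp
  show _ = (if toR d m ∈ parSet d v w then (1:ℂ) else 0)
  rw [Finset.prod_boole]
  simp only [hmem]
  by_cases h : ∀ i ∈ Finset.univ,
      0 ≤ rep v w hw (toR d m) i ∧ rep v w hw (toR d m) i < 1 <;> simp [h]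

end Cone
def toRatHom : A d →+ RatF d := AddMonoidHom.mk' (fun g : A d => toRat d g) toRat_add

lemma par_finite (v : Fin d → ℝ) (w : Fin d → Fin d → ℤ) :
    {m : Fin d → ℤ | toR d m ∈ parSet d v w}.Finite := by
  classical
  set R : Fin d → ℝ := fun j => ∑ i, |(w i j : ℝ)| with hR
  apply Set.Finite.subset
    (Set.finite_Icc (fun j => ⌈v j - R j⌉) (fun j => ⌊v j + R j⌋))
  rintro m ⟨lam, hlam, hm⟩
  have key : ∀ j, (m j : ℝ) = v j + ∑ i, lam i * (w i j : ℝ) := by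
    intro j
    have hj := congrFun hm j
    simpa [toR, Finset.sum_apply, Pi.add_apply, Pi.smul_apply, smul_eq_mul] using hj
  have hbd : ∀ j, |∑ i, lam i * (w i j : ℝ)| ≤ R j := by
    intro j
    refine (Finset.abs_sum_le_sum_abs _ _).trans (Finset.sum_le_sum fun i _ => ?_)
    rw [abs_mul]
    calc |lam i| * |(w i j : ℝ)| ≤ 1 * |(w i j : ℝ)| := by
          apply mul_le_mul_of_nonneg_right _ (abs_nonneg _)
          rw [abs_le]
          exact ⟨by linarith [(hlam i).1], le_of_lt (hlam i).2⟩
      _ = |(w i j : ℝ)| := one_mul _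
  constructor
  · intro j
    apply Int.ceil_le.2
    have := (abs_le.1 (hbd j)).1
    rw [key j] at *
    linarith [key j, (abs_le.1 (hbd j)).1]
  · intro j
    apply Int.le_floor.2
    linarith [key j, (abs_le.1 (hbd j)).2]

lemma par_poly (v : Fin d → ℝ) (w : Fin d → Fin d → ℤ) :
    ∃ f : LaurentPoly d, seriesOf d f = genSeries d (parSet d v w) ∧
      toRat d f = sigmaSet d (parSet d v w) := by
  classical
  have hfin := par_finite v w
  refine ⟨∑ m ∈ hfin.toFinset, Finsupp.single m 1, ?_, ?_⟩
  · funext m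
    show (∑ m' ∈ hfin.toFinset, Finsupp.single m' (1:ℂ)) m = _
    rw [Finsupp.finset_sum_apply]
    simp_rw [Finsupp.single_apply]
    rw [Finset.sum_ite_eq' hfin.toFinset m (fun _ => (1:ℂ))]
    rw [genSeries]
    by_cases h : toR d m ∈ parSet d v w
    · rw [if_pos h, if_pos (hfin.mem_toFinset.2 h)]
    · rw [if_neg h, if_neg (fun hc => h (hfin.mem_toFinset.1 hc))]
  · have hmap : toRat d (∑ m ∈ hfin.toFinset, Finsupp.single m (1:ℂ))
        = ∑ m ∈ hfin.toFinset, toRat d (Finsupp.single m 1) :=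
      map_sum (toRatHom.comp (AddMonoidAlgebra.coeffAddEquiv (R := ℂ) (M := Fin d → ℤ)).symm.toAddMonoidHom) _ _
    rw [hmap]
    have : ∀ m, toRat d (Finsupp.single m (1:ℂ)) = ratMon d m := by
      intro m
      rw [show (Finsupp.single m (1:ℂ)) = (AddMonoidAlgebra.single m 1 : A d).coeff from rfl, toRat_single]
      simp
    simp_rw [this]
    rw [sigmaSet, ← finsum_mem_coe_finset, Set.Finite.coe_toFinset]

lemma seriesOf_inj {f g : LaurentPoly d} (h : seriesOf d f = seriesOf d g) : f = g :=
  Finsupp.ext fun m => congrFun h m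

def toA (g : LaurentPoly d) : A d := AddMonoidAlgebra.ofCoeff g

lemma toRat_prod {ι : Type*} (s : Finset ι) (p : ι → A d) :
    toRat d ((∏ i ∈ s, p i : A d)) = ∏ i ∈ s, toRat d (p i) := by
  classical
  induction s using Finset.induction_on with
  | empty => rw [Finset.prod_empty, Finset.prod_empty]; exact toRat_one
  | @insert j s hj ih =>
    rw [Finset.prod_insert hj, Finset.prod_insert hj, toRat_mul, ih]

lemma toRat_conePolyS (w : Fin d → Fin d → ℤ) :
    toRat d (conePolyS w Finset.univ) = ∏ i, (1 - ratMon d (w i)) := by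
  rw [conePolyS, toRat_prod]
  refine Finset.prod_congr rfl fun i _ => ?_
  rw [toRat_sub, toRat_one, toRat_single]
  simp

lemma w_ne_zero {w : Fin d → Fin d → ℤ}
    (hw : LinearIndependent ℝ (fun i => toR d (w i))) (i : Fin d) : w i ≠ 0 := by
  intro h
  have h2 := hw.ne_zero i
  apply h2
  funext j
  simp [toR, h]

lemma prod_one_sub_ratMon_ne_zero {w : Fin d → Fin d → ℤ}
    (hw : LinearIndependent ℝ (fun i => toR d (w i))) :
    (∏ i, ((1:RatF d) - ratMon d (w i))) ≠ 0 := by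
  rw [Finset.prod_ne_zero_iff]
  intro i _
  rw [sub_ne_zero]
  exact fun h => ratMon_ne_one (w_ne_zero hw i) h.symm

lemma actLP_add_right (g : LaurentPoly d) (S T : (Fin d → ℤ) → ℂ) :
    actLP d g (S + T) = actLP d g S + actLP d g T := by
  funext m
  show (∑ w ∈ g.support, g w * (S (m - w) + T (m - w))) = _
  rw [Finset.sum_congr rfl (fun w _ => mul_add (g w) (S (m - w)) (T (m - w))),
    Finset.sum_add_distrib]
  rfl

def actLPhom (g : LaurentPoly d) : ((Fin d → ℤ) → ℂ) →+ ((Fin d → ℤ) → ℂ) :=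
  AddMonoidHom.mk' (actLP d g) (actLP_add_right g)

def seriesHom : A d →+ ((Fin d → ℤ) → ℂ) :=
  AddMonoidHom.mk' (fun f : A d => seriesOf d f) (fun f g => rfl)

/-- every element of PL is "good": some nonvanishing denominator clears it -/
lemma memPL_good {S : (Fin d → ℤ) → ℂ} (hS : MemPL d S) :
    ∃ (p f : LaurentPoly d), toRat d p ≠ 0 ∧ actLP d p S = seriesOf d f := by
  classical
  obtain ⟨n, g, K, hK, rfl⟩ := hS
  choose v w hw hKeq using hK
  choose f hf1 hf2 using fun i => par_poly (v i) (w i)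
  set p : Fin n → A d := fun i => conePolyS (w i) Finset.univ with hp
  have hact : ∀ i, actLP d (p i) (genSeries d (K i)) = seriesOf d (f i) := by
    intro i
    rw [hKeq i, key_identity (v i) (w i) (hw i), ← hf1 i]
  have hpne : ∀ i, toRat d (p i) ≠ 0 := by
    intro i
    rw [hp]
    show toRat d (conePolyS (w i) Finset.univ) ≠ 0
    rw [toRat_conePolyS]
    exact prod_one_sub_ratMon_ne_zero (hw i)
  refine ⟨(∏ i, p i : A d), (∑ i, (toA (g i) * ∏ j ∈ Finset.univ.erase i, p j) * toA (f i) : A d),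
    ?_, ?_⟩
  · rw [toRat_prod]
    exact Finset.prod_ne_zero_iff.2 fun i _ => hpne i
  · rw [show actLP d ((∏ i, p i : A d)) (∑ i, actLP d (g i) (genSeries d (K i)))
        = ∑ i, actLP d ((∏ j, p j : A d)) (actLP d (g i) (genSeries d (K i)))
      from map_sum (actLPhom (d := d) ((∏ i, p i : A d))) _ _]
    rw [show seriesOf d ((∑ i, (toA (g i) * ∏ j ∈ Finset.univ.erase i, p j) * toA (f i) : A d))
        = ∑ i, seriesOf d ((toA (g i) * ∏ j ∈ Finset.univ.erase i, p j) * toA (f i) : A d)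
      from map_sum seriesHom _ _]
    refine Finset.sum_congr rfl fun i _ => ?_
    have hsplit : HMul.hMul (α := A d) (β := A d) (∏ j, p j) (toA (g i))
        = (toA (g i) * ∏ j ∈ Finset.univ.erase i, p j) * p i := by
      rw [← Finset.mul_prod_erase Finset.univ p (Finset.mem_univ i)]
      show (p i * ∏ j ∈ Finset.univ.erase i, p j) * toA (g i) = _
      ring
    rw [show actLP d (g i) = actLP d (toA (g i)).coeff from rfl, ← actLP_mul _ (toA (g i)), hsplit, actLP_mul, hact i, actLP_seriesOf]
    rfl

def mulA (x y : LaurentPoly d) : LaurentPoly d := (toA x * toA y : A d)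

lemma mulA_comm (x y : LaurentPoly d) : mulA x y = mulA y x := by
  unfold mulA; rw [mul_comm]

lemma actLP_mulA (g h : LaurentPoly d) (S : (Fin d → ℤ) → ℂ) :
    actLP d (mulA g h) S = actLP d g (actLP d h S) := actLP_mul (toA g) (toA h) S

lemma actLP_seriesOf' (g f : LaurentPoly d) :
    actLP d g (seriesOf d f) = seriesOf d (mulA g f) := actLP_seriesOf (toA g) (toA f)

lemma toRat_mulA (g h : LaurentPoly d) : toRat d (mulA g h) = toRat d g * toRat d h :=
  toRat_mul (toA g) (toA h)

def phi (d : ℕ) (S : (Fin d → ℤ) → ℂ) : RatF d :=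
  if h : ∃ pf : LaurentPoly d × LaurentPoly d,
      toRat d pf.1 ≠ 0 ∧ actLP d pf.1 S = seriesOf d pf.2
  then toRat d h.choose.2 / toRat d h.choose.1 else 0

lemma phi_spec {S : (Fin d → ℤ) → ℂ} {p f : LaurentPoly d} (hp : toRat d p ≠ 0)
    (hact : actLP d p S = seriesOf d f) : phi d S = toRat d f / toRat d p := by
  have hex : ∃ pf : LaurentPoly d × LaurentPoly d,
      toRat d pf.1 ≠ 0 ∧ actLP d pf.1 S = seriesOf d pf.2 := ⟨⟨p, f⟩, hp, hact⟩
  rw [phi, dif_pos hex]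
  obtain ⟨hq, hg⟩ := hex.choose_spec
  have h1 : seriesOf d (mulA hex.choose.1 f) = seriesOf d (mulA p hex.choose.2) := by
    rw [← actLP_seriesOf', ← actLP_seriesOf', ← hact, ← hg, ← actLP_mulA, ← actLP_mulA,
      mulA_comm hex.choose.1 p]
  have h2 := seriesOf_inj h1
  have h3 : toRat d hex.choose.1 * toRat d f = toRat d p * toRat d hex.choose.2 := by
    rw [← toRat_mulA, ← toRat_mulA, h2]
  rw [div_eq_div_iff hq hp]
  linear_combination -h3

lemma phi_isPhi : IsPhi d (phi d) := by
  refine ⟨?_, ?_, ?_⟩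
  · intro S T hS hT
    obtain ⟨p, fS, hp, hactS⟩ := memPL_good hS
    obtain ⟨q, fT, hq, hactT⟩ := memPL_good hT
    have hpq : toRat d (mulA p q) ≠ 0 := by
      rw [toRat_mulA]; exact mul_ne_zero hp hq
    have hact : actLP d (mulA p q) (S + T)
        = seriesOf d ((mulA q fS + mulA p fT : LaurentPoly d)) := by
      rw [actLP_add_right]
      have e1 : actLP d (mulA p q) S = seriesOf d (mulA q fS) := by
        rw [mulA_comm p q, actLP_mulA, hactS, actLP_seriesOf']
      have e2 : actLP d (mulA p q) T = seriesOf d (mulA p fT) := by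
        rw [actLP_mulA, hactT, actLP_seriesOf']
      rw [e1, e2]
      rfl
    rw [phi_spec hpq hact, phi_spec hp hactS, phi_spec hq hactT]
    rw [show toRat d ((mulA q fS + mulA p fT : LaurentPoly d))
        = toRat d (mulA q fS) + toRat d (mulA p fT) from toRat_add (toA _) (toA _)]
    rw [toRat_mulA, toRat_mulA, toRat_mulA, div_add_div _ _ hp hq,
      div_eq_div_iff (mul_ne_zero hp hq) (mul_ne_zero hp hq)]
    ring
  · intro g S hS
    obtain ⟨p, f, hp, hact⟩ := memPL_good hS
    have hact2 : actLP d p (actLP d g S) = seriesOf d (mulA g f) := by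
      rw [← actLP_mulA, mulA_comm p g, actLP_mulA, hact, actLP_seriesOf']
    rw [phi_spec hp hact2, phi_spec hp hact, toRat_mulA, mul_div_assoc]
  · intro v w hw
    obtain ⟨f, hf1, hf2⟩ := par_poly v w
    have hp : toRat d (conePolyS w Finset.univ) ≠ 0 := by
      rw [toRat_conePolyS]; exact prod_one_sub_ratMon_ne_zero hw
    have hact : actLP d (conePolyS w Finset.univ) (genSeries d (coneSet d d v w))
        = seriesOf d f := by rw [key_identity v w hw, hf1]
    rw [phi_spec hp hact, hf2, toRat_conePolyS]

lemma memPL_zero : MemPL d 0 :=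
  ⟨0, Fin.elim0, Fin.elim0, fun i => i.elim0, by simp⟩

lemma memPL_cone_act (g : LaurentPoly d) {K : Set (Fin d → ℝ)} (hK : IsSimpleCone d K) :
    MemPL d (actLP d g (genSeries d K)) :=
  ⟨1, fun _ => g, fun _ => K, fun _ => hK, by rw [Fin.sum_univ_one]⟩

lemma memPL_cone {K : Set (Fin d → ℝ)} (hK : IsSimpleCone d K) :
    MemPL d (genSeries d K) :=
  ⟨1, fun _ => (1 : A d), fun _ => K, fun _ => hK, by rw [Fin.sum_univ_one, actLP_one]⟩

lemma isPhi_zero {φ : ((Fin d → ℤ) → ℂ) → RatF d} (h : IsPhi d φ) : φ 0 = 0 := by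
  have h0 := h.1 0 0 memPL_zero memPL_zero
  rw [add_zero] at h0
  exact (left_eq_add.1 h0)

lemma isPhi_unique {φ₁ φ₂ : ((Fin d → ℤ) → ℂ) → RatF d}
    (h1 : IsPhi d φ₁) (h2 : IsPhi d φ₂) : ∀ S, MemPL d S → φ₁ S = φ₂ S := by
  have key : ∀ n (g : Fin n → LaurentPoly d) (K : Fin n → Set (Fin d → ℝ)),
      (∀ i, IsSimpleCone d (K i)) →
      φ₁ (∑ i, actLP d (g i) (genSeries d (K i)))
        = φ₂ (∑ i, actLP d (g i) (genSeries d (K i))) := by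
    intro n
    induction n with
    | zero =>
      intro g K hK
      rw [show (∑ i : Fin 0, actLP d (g i) (genSeries d (K i))) = 0 by simp]
      rw [isPhi_zero h1, isPhi_zero h2]
    | succ n ih =>
      intro g K hK
      rw [Fin.sum_univ_succ]
      have hA : MemPL d (actLP d (g 0) (genSeries d (K 0))) := memPL_cone_act _ (hK 0)
      have hB : MemPL d (∑ i : Fin n, actLP d (g i.succ) (genSeries d (K i.succ))) :=
        ⟨n, _, _, fun i => hK i.succ, rfl⟩
      rw [h1.1 _ _ hA hB, h2.1 _ _ hA hB, ih _ _ (fun i => hK i.succ)]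
      congr 1
      rw [h1.2.1 _ _ (memPL_cone (hK 0)), h2.2.1 _ _ (memPL_cone (hK 0))]
      congr 1
      obtain ⟨v, w, hw, hKeq⟩ := hK 0
      rw [hKeq, h1.2.2 v w hw, h2.2.2 v w hw]
  intro S hS
  obtain ⟨n, g, K, hK, rfl⟩ := hS
  exact key n g K hK

end S4

/-- **Theorem of Brion/Ishida.** There is a unique
`ℂ[x₁^{±1},…,x_d^{±1}]`-module homomorphism `φ : PL → ℂ(x₁,…,x_d)` with
`φ(S_K) = σ_{P_K}(x) / Π (1 - x^{wᵢ})` for every simple rational cone `K`. -/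
theorem statement4 (d : ℕ) :
    ∃ φ : ((Fin d → ℤ) → ℂ) → RatF d, IsPhi d φ ∧
      ∀ φ' : ((Fin d → ℤ) → ℂ) → RatF d, IsPhi d φ' →
        ∀ S, MemPL d S → φ' S = φ S :=
  ⟨S4.phi d, S4.phi_isPhi, fun φ' hφ' S hS => S4.isPhi_unique hφ' S4.phi_isPhi S hS⟩

end
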